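/- The limit as t → ∞ of Φ⁻¹(2Φ(t) - 1)/t equals 1. -/

import Mathlib

open Real Set

/-- Standard Gaussian density. -/
noncomputable def phi (t : ℝ) : ℝ := (Real.sqrt (2 * Real.pi))⁻¹ * Real.exp (-t ^ 2 / 2)

/-- Standard Gaussian cumulative distribution function. -/
noncomputable def Phi (t : ℝ) : ℝ := ∫ s in Set.Iic t, phi s

open MeasureTheory in
lemma phi_pos (t : ℝ) : 0 < phi t := by
  unfold phi
  positivity

open MeasureTheory in
lemma phi_eq (t : ℝ) : phi t = (Real.sqrt (2 * Real.pi))⁻¹ * Real.exp (-(2⁻¹) * t ^ 2) := by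
  unfold phi; ring_nf

open MeasureTheory in
lemma integrable_phi : Integrable phi := by
  have h : phi = fun t => (Real.sqrt (2 * Real.pi))⁻¹ * Real.exp (-(2⁻¹) * t ^ 2) := funext phi_eq
  rw [h]
  exact (integrable_exp_neg_mul_sq (by norm_num)).const_mul _

open MeasureTheory in
lemma integral_phi : ∫ s, phi s = 1 := by
  simp_rw [phi_eq]
  rw [integral_const_mul, integral_gaussian]
  rw [show (π / 2⁻¹) = 2 * π by ring]
  rw [inv_mul_cancel₀ (Real.sqrt_ne_zero'.2 (by positivity))]

open MeasureTheory in
lemma Phi_sub_Phi {a b : ℝ} : Phi b - Phi a = ∫ s in a..b, phi s :=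
  intervalIntegral.integral_Iic_sub_Iic integrable_phi.integrableOn integrable_phi.integrableOn

open MeasureTheory in
lemma Phi_strictMono : StrictMono Phi := by
  intro a b hab
  have : 0 < Phi b - Phi a := by
    rw [Phi_sub_Phi]
    exact intervalIntegral.intervalIntegral_pos_of_pos integrable_phi.intervalIntegrable phi_pos hab
  linarith

open MeasureTheory in
lemma Phi_add_tail (t : ℝ) : Phi t + ∫ s in Set.Ioi t, phi s = 1 := by
  rw [← integral_phi]
  rw [← MeasureTheory.integral_add_compl (measurableSet_Iic (a := t)) integrable_phi]
  rw [compl_Iic]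
  rfl

open MeasureTheory in
lemma Phi_lt_one (t : ℝ) : Phi t < 1 := by
  have h : 0 < ∫ s in Set.Ioi t, phi s := by
    have h1 : Phi (t + 1) - Phi t ≤ ∫ s in Set.Ioi t, phi s := by
      rw [Phi_sub_Phi, intervalIntegral.integral_of_le (by linarith)]
      apply setIntegral_mono_set integrable_phi.integrableOn
        (Filter.Eventually.of_forall fun s => (phi_pos s).le)
      exact Filter.Eventually.of_forall fun s hs => hs.1
    have := Phi_strictMono (show t < t + 1 by linarith)
    linarith
  have := Phi_add_tail t
  linarith

open MeasureTheory in
lemma Phi_zero : Phi 0 = 1 / 2 := by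
  have hsymm : Phi 0 = ∫ s in Set.Ioi (0:ℝ), phi s := by
    have h1 : Phi 0 = ∫ s in Set.Iic (0:ℝ), phi (-s) := by
      unfold Phi phi
      congr 1
      ext s
      ring_nf
    rw [h1, integral_comp_neg_Iic 0 phi, neg_zero]
  have := Phi_add_tail 0
  linarith [hsymm]

open MeasureTheory in
lemma tail_integral (t : ℝ) :
    ∫ s in Set.Ioi t, s * Real.exp (-(2⁻¹) * s ^ 2) = Real.exp (-(2⁻¹) * t ^ 2) := by
  have h := MeasureTheory.integral_Ioi_of_hasDerivAt_of_tendsto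
    (f := fun s => -Real.exp (-(2⁻¹) * s ^ 2))
    (f' := fun s => s * Real.exp (-(2⁻¹) * s ^ 2)) (a := t) (m := 0)
    ?_ ?_ ?_ ?_
  · rw [h]; ring
  · have hc : Continuous fun s : ℝ => -Real.exp (-(2⁻¹) * s ^ 2) := by fun_prop
    exact hc.continuousWithinAt
  · intro x hx
    have : HasDerivAt (fun s : ℝ => -(2⁻¹) * s ^ 2) (-(2⁻¹) * (2 * x)) x := by
      simpa using ((hasDerivAt_pow 2 x).const_mul (-(2⁻¹:ℝ)))
    have := (this.exp).neg
    convert this using 1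
    · rfl
    · ring
  · exact ((integrable_mul_exp_neg_mul_sq (by norm_num : (0:ℝ) < 2⁻¹)).integrableOn)
  · have : Filter.Tendsto (fun s : ℝ => Real.exp (-(2⁻¹) * s ^ 2)) Filter.atTop (nhds 0) := by
      have h1 : Filter.Tendsto (fun s : ℝ => -(2⁻¹) * s ^ 2) Filter.atTop Filter.atBot := by
        apply Filter.Tendsto.const_mul_atTop_of_neg (by norm_num)
        exact Filter.tendsto_pow_atTop (by norm_num)
      exact Real.tendsto_exp_atBot.comp h1
    simpa using this.neg

open MeasureTheory in
lemma tail_le (t : ℝ) (ht : 0 < t) : (∫ s in Set.Ioi t, phi s) ≤ phi t / t := by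
  have hmono : (∫ s in Set.Ioi t, phi s) ≤ ∫ s in Set.Ioi t, (s / t) * phi s := by
    apply setIntegral_mono_on integrable_phi.integrableOn
    · apply Integrable.integrableOn
      have : Integrable fun s => (Real.sqrt (2 * Real.pi))⁻¹ * t⁻¹ * (s * Real.exp (-(2⁻¹) * s ^ 2)) :=
        (integrable_mul_exp_neg_mul_sq (by norm_num : (0:ℝ) < 2⁻¹)).const_mul _
      convert this using 2 with s
      rw [phi_eq]; ring
    · exact measurableSet_Ioi
    · intro s hs
      have h1 : 1 ≤ s / t := (one_le_div ht).2 (le_of_lt hs)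
      nlinarith [phi_pos s]
  have heq : (∫ s in Set.Ioi t, (s / t) * phi s) = phi t / t := by
    have : (fun s => (s / t) * phi s)
        = fun s => ((Real.sqrt (2 * Real.pi))⁻¹ / t) * (s * Real.exp (-(2⁻¹) * s ^ 2)) := by
      ext s; rw [phi_eq]; ring
    rw [this, integral_const_mul, tail_integral, phi_eq]
    ring
  linarith

open MeasureTheory in
lemma band_le {c t : ℝ} (hc : 0 < c) (hc1 : c < 1) (ht : 0 < t) :
    (1 - c) * t * phi t ≤ Phi t - Phi (c * t) := by
  rw [Phi_sub_Phi, intervalIntegral.integral_of_le (by nlinarith)]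
  have h1 : (1 - c) * t * phi t = ∫ _ in Set.Ioc (c * t) t, phi t := by
    rw [setIntegral_const, measureReal_def, Real.volume_Ioc, ENNReal.toReal_ofReal (by nlinarith), smul_eq_mul]
    ring
  rw [h1]
  apply setIntegral_mono_on (integrableOn_const measure_Ioc_lt_top.ne)
    integrable_phi.integrableOn measurableSet_Ioc
  intro s hs
  have hs0 : 0 ≤ s := le_trans (by positivity) hs.1.le
  unfold phi
  have h2 : s ^ 2 ≤ t ^ 2 := by nlinarith [hs.2]
  have h3 : Real.exp (-t ^ 2 / 2) ≤ Real.exp (-s ^ 2 / 2) := by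
    apply Real.exp_le_exp.2
    linarith
  have h4 : (0:ℝ) < (Real.sqrt (2 * Real.pi))⁻¹ := by positivity
  nlinarith

open MeasureTheory in
/-- `lim_{t → ∞} Φ⁻¹(2Φ(t) - 1)/t = 1`. -/
theorem stmt_9 (Φinv : ℝ → ℝ)
    (hinv : ∀ v ∈ Set.Ioo (0:ℝ) 1, Phi (Φinv v) = v)
    (hinv' : ∀ t : ℝ, Φinv (Phi t) = t) :
    Filter.Tendsto (fun t => Φinv (2 * Phi t - 1) / t) Filter.atTop (nhds 1) := by
  have key : ∀ c : ℝ, 0 < c → c < 1 → ∀ t : ℝ, max 1 (1/(1-c)) ≤ t →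
      c ≤ Φinv (2 * Phi t - 1) / t ∧ Φinv (2 * Phi t - 1) / t < 1 := by
    intro c hc hc1 t ht
    have ht1 : (1:ℝ) ≤ t := le_trans (le_max_left _ _) ht
    have ht0 : 0 < t := by linarith
    have htc : 1/(1-c) ≤ t := le_trans (le_max_right _ _) ht
    have hquad : 1 ≤ (1 - c) * t ^ 2 := by
      have h1c : 0 < 1 - c := by linarith
      rw [div_le_iff₀ h1c] at htc
      nlinarith
    -- tail ≤ band
    have htail : 1 - Phi t ≤ phi t / t := by
      have := Phi_add_tail t
      have := tail_le t ht0
      linarith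
    have hband := band_le hc hc1 ht0
    have hcmp : phi t / t ≤ (1 - c) * t * phi t := by
      rw [div_le_iff₀ ht0]
      have := phi_pos t
      nlinarith
    -- Phi (c*t) ≤ 2 Phi t - 1
    have h1 : Phi (c * t) ≤ 2 * Phi t - 1 := by linarith
    have h2 : 2 * Phi t - 1 < Phi t := by linarith [Phi_lt_one t]
    have hmem : 2 * Phi t - 1 ∈ Set.Ioo (0:ℝ) 1 := by
      constructor
      · have : Phi 0 < Phi (c * t) := Phi_strictMono (by positivity)
        rw [Phi_zero] at this
        linarith
      · linarith [Phi_lt_one t]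
    have hP : Phi (Φinv (2 * Phi t - 1)) = 2 * Phi t - 1 := hinv _ hmem
    have hlow : c * t ≤ Φinv (2 * Phi t - 1) := by
      by_contra h
      push_neg at h
      have := Phi_strictMono h
      rw [hP] at this
      linarith
    have hhigh : Φinv (2 * Phi t - 1) < t := by
      by_contra h
      push_neg at h
      have := Phi_strictMono.monotone h
      rw [hP] at this
      linarith
    constructor
    · rw [le_div_iff₀ ht0]; linarith
    · rw [div_lt_one ht0]; exact hhigh
  rw [Metric.tendsto_nhds]
  intro ε hε
  set c : ℝ := max (1/2) (1 - ε/2) with hc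
  have hc0 : 0 < c := lt_of_lt_of_le (by norm_num) (le_max_left _ _)
  have hc1 : c < 1 := by
    rcases max_cases (1/2 : ℝ) (1 - ε/2) with ⟨h, _⟩ | ⟨h, _⟩ <;> rw [hc, h] <;> linarith
  have h1c : 1 - c ≤ ε/2 := by
    have := le_max_right (1/2 : ℝ) (1 - ε/2)
    linarith [this]
  filter_upwards [Filter.eventually_ge_atTop (max 1 (1/(1-c)))] with t ht
  obtain ⟨hl, hh⟩ := key c hc0 hc1 t ht
  rw [Real.dist_eq, abs_lt]
  constructor <;> linarith
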